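/- Let c ∈ ℝ^n with ascending runs indexed by blocks B_1,...,B_{k+1}, and let 𝒜(c) be the run-averaged vector. Then c − 𝒜(c) is a nonnegative linear combination of the vectors v_i = e_{i+1} − e_i over those indices i with i, i+1 in the same ascending run; specifically, c = 𝒜(c) + Σ_ℓ Σ_{i=m_ℓ}^{M_ℓ−1} [(i+1−m_ℓ) a_ℓ − (c_{m_ℓ}+...+c_i)] v_i, where m_ℓ, M_ℓ are the min and max index of block B_ℓ and a_ℓ is its average, and each coefficient (i+1−m_ℓ) a_ℓ − (c_{m_ℓ}+...+c_i) is nonnegative. -/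

import Mathlib

open scoped Classical

/-- The set of indices lying in the same ascending run of `c` as `i`:
all `j` such that every consecutive step between `i` and `j` is a weak ascent. -/
noncomputable def runBlock {n : ℕ} (c : Fin n → ℝ) (i : Fin n) : Finset (Fin n) :=
  Finset.univ.filter (fun j =>
    ∀ (k : ℕ) (h1 : k < n) (h2 : k + 1 < n),
      min i.val j.val ≤ k → k + 1 ≤ max i.val j.val → c ⟨k, h1⟩ ≤ c ⟨k + 1, h2⟩)

/-- The averaging map `𝒜`: replace each entry of `c` by the arithmetic mean of
the entries of the ascending run containing it. -/
noncomputable def avgMap {n : ℕ} (c : Fin n → ℝ) : Fin n → ℝ :=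
  fun i => (∑ j ∈ runBlock c i, c j) / (runBlock c i).card

/-- The coefficient `(i+1-m_ℓ)·a_ℓ - (c_{m_ℓ} + ⋯ + c_i)` attached to `v_i`,
where `m_ℓ` is the minimum index of the ascending run containing `i` and `a_ℓ`
is the run average:  the number of indices of the run that are `≤ i` times the
run average, minus the sum of the entries of the run at indices `≤ i`. -/
noncomputable def runCoeff {n : ℕ} (c : Fin n → ℝ) (i : Fin n) : ℝ :=
  (((runBlock c i).filter (fun j => j ≤ i)).card : ℝ) * avgMap c i -
    ∑ j ∈ (runBlock c i).filter (fun j => j ≤ i), c j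

namespace AvgAux

variable {n : ℕ} (c : Fin n → ℝ)

lemma mem_runBlock {i j : Fin n} :
    j ∈ runBlock c i ↔ ∀ (k : ℕ) (h1 : k < n) (h2 : k + 1 < n),
      min i.val j.val ≤ k → k + 1 ≤ max i.val j.val → c ⟨k, h1⟩ ≤ c ⟨k + 1, h2⟩ := by
  simp [runBlock]

lemma self_mem (i : Fin n) : i ∈ runBlock c i := by
  rw [mem_runBlock]
  intro k h1 h2 hk1 hk2
  exfalso; omega

lemma mem_symm {i j : Fin n} (h : j ∈ runBlock c i) : i ∈ runBlock c j := by
  rw [mem_runBlock] at h ⊢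
  intro k h1 h2 hk1 hk2
  exact h k h1 h2 (by omega) (by omega)

lemma mem_trans {i j j' : Fin n} (h : j ∈ runBlock c i) (h' : j' ∈ runBlock c j) :
    j' ∈ runBlock c i := by
  rw [mem_runBlock] at h h' ⊢
  intro k h1 h2 hk1 hk2
  by_cases hc : min j.val j'.val ≤ k ∧ k + 1 ≤ max j.val j'.val
  · exact h' k h1 h2 hc.1 hc.2
  · exact h k h1 h2 (by omega) (by omega)

lemma block_eq {i j : Fin n} (h : j ∈ runBlock c i) : runBlock c i = runBlock c j := by
  ext j'
  constructor
  · intro h'; exact mem_trans c (mem_symm c h) h'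
  · intro h'; exact mem_trans c h h'

lemma mem_of_between {i j : Fin n} (h : j ∈ runBlock c i) (m : ℕ) (hm : m < n)
    (h1 : min i.val j.val ≤ m) (h2 : m ≤ max i.val j.val) :
    (⟨m, hm⟩ : Fin n) ∈ runBlock c i := by
  have hv : ((⟨m, hm⟩ : Fin n) : ℕ) = m := rfl
  rw [mem_runBlock] at h ⊢
  intro k k1 k2 hk1 hk2
  rw [hv] at hk1 hk2
  exact h k k1 k2 (by omega) (by omega)

lemma chain_le : ∀ (b : ℕ) (hb : b < n) (a : ℕ) (ha : a < n), a ≤ b →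
    (∀ (k : ℕ) (h1 : k < n) (h2 : k + 1 < n), a ≤ k → k + 1 ≤ b → c ⟨k, h1⟩ ≤ c ⟨k + 1, h2⟩) →
    c ⟨a, ha⟩ ≤ c ⟨b, hb⟩ := by
  intro b
  induction b with
  | zero =>
    intro hb a ha hab h
    have : a = 0 := by omega
    subst this
    exact le_refl _
  | succ b ih =>
    intro hb a ha hab h
    rcases Nat.eq_or_lt_of_le hab with he | hl
    · subst he; exact le_refl _
    · exact le_trans
        (ih (by omega) a ha (by omega) (fun k h1 h2 hk1 hk2 => h k h1 h2 hk1 (by omega)))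
        (h b (by omega) hb (by omega) (by omega))

lemma mono_on {i j₁ j₂ : Fin n} (h1 : j₁ ∈ runBlock c i) (h2 : j₂ ∈ runBlock c i)
    (h12 : j₁ ≤ j₂) : c j₁ ≤ c j₂ := by
  have hb : j₂ ∈ runBlock c j₁ := mem_trans c (mem_symm c h1) h2
  rw [mem_runBlock] at hb
  rw [Fin.le_def] at h12
  have := chain_le c j₂.val j₂.isLt j₁.val j₁.isLt h12
    (fun k k1 k2 hk1 hk2 => hb k k1 k2 (by omega) (by omega))
  simpa using this

lemma avg_eq {i j : Fin n} (h : j ∈ runBlock c i) : avgMap c j = avgMap c i := by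
  unfold avgMap
  rw [← block_eq c h]

lemma card_pos (i : Fin n) : 0 < (runBlock c i).card :=
  Finset.card_pos.mpr ⟨i, self_mem c i⟩

lemma coeff_nonneg (i : Fin n) : 0 ≤ runCoeff c i := by
  classical
  set B := runBlock c i with hB
  set P := B.filter (fun j => j ≤ i) with hP
  set Q := B.filter (fun j => ¬ j ≤ i) with hQ
  have hcard : P.card + Q.card = B.card := Finset.card_filter_add_card_filter_not _
  have hsum : (∑ j ∈ P, c j) + (∑ j ∈ Q, c j) = ∑ j ∈ B, c j :=
    Finset.sum_filter_add_sum_filter_not _ _ _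
  have hPle : ∑ j ∈ P, c j ≤ (P.card : ℝ) * c i := by
    have := Finset.sum_le_card_nsmul P c (c i)
      (fun x hx => mono_on c (Finset.mem_filter.mp hx).1 (self_mem c i)
        (Finset.mem_filter.mp hx).2)
    simpa [nsmul_eq_mul] using this
  have hQle : (Q.card : ℝ) * c i ≤ ∑ j ∈ Q, c j := by
    have := Finset.card_nsmul_le_sum Q c (c i)
      (fun x hx => mono_on c (self_mem c i) (Finset.mem_filter.mp hx).1
        (le_of_not_ge (Finset.mem_filter.mp hx).2))
    simpa [nsmul_eq_mul] using this
  have hBpos : (0 : ℝ) < (B.card : ℝ) := by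
    exact_mod_cast card_pos c i
  have key : (∑ j ∈ P, c j) * (B.card : ℝ) ≤ (P.card : ℝ) * ∑ j ∈ B, c j := by
    have hc : (B.card : ℝ) = (P.card : ℝ) + (Q.card : ℝ) := by exact_mod_cast hcard.symm
    have hs : (∑ j ∈ B, c j) = (∑ j ∈ P, c j) + ∑ j ∈ Q, c j := hsum.symm
    have hPc : (0 : ℝ) ≤ (P.card : ℝ) := by positivity
    have hQc : (0 : ℝ) ≤ (Q.card : ℝ) := by positivity
    have key2 : (∑ j ∈ P, c j) * (Q.card : ℝ) ≤ (P.card : ℝ) * ∑ j ∈ Q, c j := by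
      calc (∑ j ∈ P, c j) * (Q.card : ℝ) ≤ ((P.card : ℝ) * c i) * (Q.card : ℝ) :=
            mul_le_mul_of_nonneg_right hPle hQc
        _ = (P.card : ℝ) * ((Q.card : ℝ) * c i) := by ring
        _ ≤ (P.card : ℝ) * ∑ j ∈ Q, c j := mul_le_mul_of_nonneg_left hQle hPc
    rw [hc, hs]
    nlinarith [key2]
  have : ∑ j ∈ P, c j ≤ (P.card : ℝ) * avgMap c i := by
    unfold avgMap
    rw [← hB, mul_div_assoc', le_div_iff₀ hBpos]
    exact key
  unfold runCoeff
  rw [← hB, ← hP]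
  linarith

lemma coeff_diff {jp j : Fin n} (hj : (j : ℕ) = (jp : ℕ) + 1) (hmem : j ∈ runBlock c jp) :
    runCoeff c jp = runCoeff c j + (c j - avgMap c j) := by
  have hbe : runBlock c jp = runBlock c j := block_eq c hmem
  have hav : avgMap c jp = avgMap c j := (avg_eq c hmem).symm
  have hnotmem : j ∉ (runBlock c j).filter (fun x => x ≤ jp) := by
    simp only [Finset.mem_filter]
    rintro ⟨-, hle⟩
    rw [Fin.le_def] at hle; omega
  have hset : (runBlock c j).filter (fun x => x ≤ j) =
      insert j ((runBlock c j).filter (fun x => x ≤ jp)) := by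
    ext x
    simp only [Finset.mem_filter, Finset.mem_insert]
    constructor
    · rintro ⟨hx, hxle⟩
      rcases eq_or_ne x j with rfl | hne
      · exact Or.inl rfl
      · refine Or.inr ⟨hx, ?_⟩
        have hne' : (x : ℕ) ≠ (j : ℕ) := fun h => hne (Fin.ext h)
        rw [Fin.le_def] at hxle ⊢
        omega
    · rintro (rfl | ⟨hx, hxle⟩)
      · exact ⟨self_mem c _, le_refl _⟩
      · refine ⟨hx, ?_⟩
        rw [Fin.le_def] at hxle ⊢
        omega
  unfold runCoeff
  rw [hbe, hav, hset, Finset.card_insert_of_notMem hnotmem, Finset.sum_insert hnotmem]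
  push_cast
  ring

lemma coeff_last {j : Fin n} (hmax : ∀ j' ∈ runBlock c j, j' ≤ j) : runCoeff c j = 0 := by
  have hcard : ((runBlock c j).card : ℝ) ≠ 0 := by
    have := card_pos c j
    positivity
  unfold runCoeff avgMap
  rw [Finset.filter_true_of_mem hmax]
  field_simp
  ring

lemma coeff_first {j : Fin n} (hmin : ∀ j' ∈ runBlock c j, j ≤ j') :
    runCoeff c j = avgMap c j - c j := by
  have hset : (runBlock c j).filter (fun x => x ≤ j) = {j} := by
    ext x
    simp only [Finset.mem_filter, Finset.mem_singleton]
    constructor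
    · rintro ⟨hx, hxle⟩
      exact le_antisymm hxle (hmin x hx)
    · rintro rfl
      exact ⟨self_mem c _, le_refl _⟩
  unfold runCoeff
  rw [hset, Finset.card_singleton, Finset.sum_singleton]
  push_cast
  ring

lemma max_of_not (j : Fin n)
    (hns : ¬ ∃ h : (j : ℕ) + 1 < n, (⟨(j : ℕ) + 1, h⟩ : Fin n) ∈ runBlock c j) :
    ∀ j' ∈ runBlock c j, j' ≤ j := by
  intro j' hj'
  by_contra hlt
  rw [Fin.le_def] at hlt
  have hj'lt := j'.isLt
  have h1 : (j : ℕ) + 1 < n := by omega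
  exact hns ⟨h1, mem_of_between c hj' ((j : ℕ) + 1) h1 (by omega) (by omega)⟩

lemma min_of_not (j : Fin n)
    (hns : ∀ jp : Fin n, (jp : ℕ) + 1 = (j : ℕ) → j ∉ runBlock c jp) :
    ∀ j' ∈ runBlock c j, j ≤ j' := by
  intro j' hj'
  by_contra hlt
  rw [Fin.le_def] at hlt
  have hjlt := j.isLt
  have hm : (j : ℕ) - 1 < n := by omega
  have hmem : (⟨(j : ℕ) - 1, hm⟩ : Fin n) ∈ runBlock c j :=
    mem_of_between c hj' ((j : ℕ) - 1) hm (by omega) (by omega)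
  exact hns ⟨(j : ℕ) - 1, hm⟩ (by simp; omega) (mem_symm c hmem)

end AvgAux

/-- `c = 𝒜(c) + Σ_i coeff_i · v_i`, summing over the indices `i`
such that `i` and `i+1` lie in the same ascending run, where
`v_i = e_{i+1} - e_i`, and each coefficient `coeff_i = runCoeff c i` is
nonnegative. -/
theorem avgMap_decomposition (n : ℕ) (c : Fin n → ℝ) :
    (∀ i ∈ Finset.univ.filter
        (fun i : Fin n => ∃ h : (i : ℕ) + 1 < n, (⟨(i : ℕ) + 1, h⟩ : Fin n) ∈ runBlock c i),
      0 ≤ runCoeff c i) ∧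
    ∀ j : Fin n, c j = avgMap c j +
      ∑ i ∈ Finset.univ.filter
        (fun i : Fin n => ∃ h : (i : ℕ) + 1 < n, (⟨(i : ℕ) + 1, h⟩ : Fin n) ∈ runBlock c i),
        runCoeff c i *
          ((if (j : ℕ) = (i : ℕ) + 1 then (1 : ℝ) else 0) - (if j = i then (1 : ℝ) else 0)) := by
  classical
  set S := Finset.univ.filter
      (fun i : Fin n => ∃ h : (i : ℕ) + 1 < n, (⟨(i : ℕ) + 1, h⟩ : Fin n) ∈ runBlock c i)
    with hS
  have memS_iff : ∀ i : Fin n,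
      i ∈ S ↔ ∃ h : (i : ℕ) + 1 < n, (⟨(i : ℕ) + 1, h⟩ : Fin n) ∈ runBlock c i := by
    intro i; simp [hS]
  constructor
  · intro i _
    exact AvgAux.coeff_nonneg c i
  · intro j
    have hsum : ∑ i ∈ S, runCoeff c i *
          ((if (j : ℕ) = (i : ℕ) + 1 then (1 : ℝ) else 0) - (if j = i then (1 : ℝ) else 0))
        = (∑ i ∈ S, if (j : ℕ) = (i : ℕ) + 1 then runCoeff c i else 0)
          - (∑ i ∈ S, if j = i then runCoeff c i else 0) := by
      rw [← Finset.sum_sub_distrib]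
      refine Finset.sum_congr rfl fun i _ => ?_
      simp only [mul_sub, mul_ite, mul_one, mul_zero]
    have hsecond : (∑ i ∈ S, if j = i then runCoeff c i else 0)
        = if j ∈ S then runCoeff c j else 0 := Finset.sum_ite_eq S j _
    rw [hsum, hsecond]
    by_cases hpred : ∃ i : Fin n, (i : ℕ) + 1 = (j : ℕ) ∧ j ∈ runBlock c i
    · obtain ⟨jp, hjp, hmem⟩ := hpred
      have hmemS : jp ∈ S := by
        rw [memS_iff]
        have hlt : (jp : ℕ) + 1 < n := by rw [hjp]; exact j.isLt
        refine ⟨hlt, ?_⟩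
        have : (⟨(jp : ℕ) + 1, hlt⟩ : Fin n) = j := Fin.ext (show (jp : ℕ) + 1 = (j : ℕ) by omega)
        rw [this]; exact hmem
      have hfirst : (∑ i ∈ S, if (j : ℕ) = (i : ℕ) + 1 then runCoeff c i else 0)
          = runCoeff c jp := by
        have hcongr : ∀ i ∈ S, (if (j : ℕ) = (i : ℕ) + 1 then runCoeff c i else 0)
            = (if jp = i then runCoeff c i else 0) := by
          intro i _
          refine if_congr ?_ rfl rfl
          rw [Fin.ext_iff]
          omega
        rw [Finset.sum_congr rfl hcongr, Finset.sum_ite_eq, if_pos hmemS]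
      rw [hfirst]
      have hdiff := AvgAux.coeff_diff c (by omega : (j : ℕ) = (jp : ℕ) + 1) hmem
      by_cases hj : j ∈ S
      · rw [if_pos hj]
        linarith
      · rw [if_neg hj]
        have h0 : runCoeff c j = 0 := by
          refine AvgAux.coeff_last c (AvgAux.max_of_not c j ?_)
          rw [memS_iff] at hj
          exact hj
        linarith
    · have hfirst : (∑ i ∈ S, if (j : ℕ) = (i : ℕ) + 1 then runCoeff c i else 0) = 0 := by
        refine Finset.sum_eq_zero fun i hi => if_neg fun hc => hpred ?_
        rw [memS_iff] at hi
        obtain ⟨h1, hmem⟩ := hi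
        refine ⟨i, by omega, ?_⟩
        have : (⟨(i : ℕ) + 1, h1⟩ : Fin n) = j := Fin.ext (show (i : ℕ) + 1 = (j : ℕ) by omega)
        rw [← this]; exact hmem
      have hmin : ∀ j' ∈ runBlock c j, j ≤ j' := by
        refine AvgAux.min_of_not c j fun jp he hmem => hpred ⟨jp, he, hmem⟩
      have h1 := AvgAux.coeff_first c hmin
      rw [hfirst]
      by_cases hj : j ∈ S
      · rw [if_pos hj]
        linarith
      · rw [if_neg hj]
        have h2 : runCoeff c j = 0 := by
          refine AvgAux.coeff_last c (AvgAux.max_of_not c j ?_)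
          rw [memS_iff] at hj
          exact hj
        linarith
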